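/- Let $\theta \ge 0$ be real and let $1 \le k \le n$ be integers, with the convention $q^{\theta}_{n,n+1}(t) = 0$. Then for every $t > 0$, $\frac{d}{dt}\, q^{\theta}_{n,k}(t) = -\frac{k(k+\theta-1)}{2}\, q^{\theta}_{n,k}(t) + \frac{(k+1)(k+\theta)}{2}\, q^{\theta}_{n,k+1}(t)$. (This is the Kolmogorov forward equation of the pure death process $A_n^{\theta}$ in which transitions $j \to j-1$ occur at rate $j(j+\theta-1)/2$.) -/

import Mathlib

open Finset

/-- Rising factorial `x^{(m)} = x (x+1) ⋯ (x+m-1)` of a real number. -/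
noncomputable def risingFac (x : ℝ) (m : ℕ) : ℝ := ∏ i ∈ Finset.range m, (x + i)

/-- Falling factorial `n^{[j]} = n (n-1) ⋯ (n-j+1)` of a natural number, as a real. -/
noncomputable def fallingFac (n : ℕ) (j : ℕ) : ℝ := ∏ i ∈ Finset.range j, ((n : ℝ) - i)

/-- `q θ n k t = P(A_n^θ(t) = k)`.  Note that for `k = n + 1` the sum is empty, so
`q θ n (n+1) t = 0`, matching the convention `q^θ_{n,n+1}(t) = 0`. -/
noncomputable def q (θ : ℝ) (n k : ℕ) (t : ℝ) : ℝ :=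
  ∑ j ∈ Finset.Icc k n,
    Real.exp (-(j * (j + θ - 1) * t) / 2) * (-1 : ℝ) ^ (j - k) *
      ((2 * j + θ - 1) * risingFac (k + θ) (j - 1)) /
        ((Nat.factorial k : ℝ) * (Nat.factorial (j - k) : ℝ)) *
      (fallingFac n j / risingFac (n + θ) j)

lemma risingFac_shift (x : ℝ) (m : ℕ) :
    x * risingFac (x + 1) m = risingFac x m * (x + m) := by
  have h2 : risingFac x (m + 1) = x * risingFac (x + 1) m := by
    unfold risingFac
    rw [Finset.prod_range_succ']
    have h : ∀ i ∈ Finset.range m, (x + ((i + 1 : ℕ) : ℝ)) = (x + 1) + (i : ℝ) := by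
      intro i _; push_cast; ring
    rw [Finset.prod_congr rfl h]
    push_cast; ring
  rw [← h2]; unfold risingFac; rw [Finset.prod_range_succ]

lemma alg_key (θ J K E s R C fk d : ℝ) (hKθ : K + θ ≠ 0) (hK1 : K + 1 ≠ 0)
    (hfk : fk ≠ 0) (hd : d ≠ 0) (hJK : J - K ≠ 0) :
    E * (-(J * (J + θ - 1)) / 2) * -s * ((2 * J + θ - 1) * R) / (fk * ((J - K) * d)) * C
      = -(K * (K + θ - 1) / 2) *
          (E * -s * ((2 * J + θ - 1) * R) / (fk * ((J - K) * d)) * C)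
        + (K + 1) * (K + θ) / 2 *
          (E * s * ((2 * J + θ - 1) * (R * (K + θ + (J - 1)) / (K + θ))) /
            ((K + 1) * fk * d) * C) := by
  field_simp
  ring

/-- The Kolmogorov forward equation of the pure death process `A_n^θ`:
`d/dt q^θ_{n,k}(t) = -(k(k+θ-1)/2) q^θ_{n,k}(t) + ((k+1)(k+θ)/2) q^θ_{n,k+1}(t)`. -/
theorem stmt_12 (θ : ℝ) (hθ : 0 ≤ θ) (n k : ℕ) (hk : 1 ≤ k) (hkn : k ≤ n)
    (t : ℝ) (ht : 0 < t) :
    HasDerivAt (fun s => q θ n k s)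
      (-((k : ℝ) * ((k : ℝ) + θ - 1) / 2) * q θ n k t
        + ((k : ℝ) + 1) * ((k : ℝ) + θ) / 2 * q θ n (k + 1) t) t := by
  have hderiv : HasDerivAt (fun s => q θ n k s)
      (∑ j ∈ Finset.Icc k n,
        Real.exp (-(j * (j + θ - 1) * t) / 2) * (-((j : ℝ) * ((j : ℝ) + θ - 1)) / 2)
          * (-1 : ℝ) ^ (j - k) *
          ((2 * j + θ - 1) * risingFac (k + θ) (j - 1)) /
            ((Nat.factorial k : ℝ) * (Nat.factorial (j - k) : ℝ)) *
          (fallingFac n j / risingFac (n + θ) j)) t := by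
    simp only [q]
    apply HasDerivAt.fun_sum
    intro j _
    have h1 : HasDerivAt (fun s : ℝ => -((j : ℝ) * ((j : ℝ) + θ - 1) * s) / 2)
        (-((j : ℝ) * ((j : ℝ) + θ - 1)) / 2) t := by
      simpa using (((hasDerivAt_id t).const_mul ((j : ℝ) * ((j : ℝ) + θ - 1))).neg.div_const 2)
    have h2 := h1.exp
    have h3 := (((h2.mul_const ((-1 : ℝ) ^ (j - k))).mul_const
        ((2 * (j : ℝ) + θ - 1) * risingFac ((k : ℝ) + θ) (j - 1))).div_const
        ((Nat.factorial k : ℝ) * (Nat.factorial (j - k) : ℝ))).mul_const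
        (fallingFac n j / risingFac ((n : ℝ) + θ) j)
    exact h3
  convert hderiv using 1
  rw [q, q, Finset.Icc_add_one_left_eq_Ioc, Finset.mul_sum, Finset.mul_sum,
    Finset.Icc_eq_cons_Ioc hkn, Finset.sum_cons, Finset.sum_cons]
  have h0 : Real.exp (-(k * (k + θ - 1) * t) / 2) * (-((k : ℝ) * ((k : ℝ) + θ - 1)) / 2)
        * (-1 : ℝ) ^ (k - k) *
        ((2 * k + θ - 1) * risingFac (k + θ) (k - 1)) /
          ((Nat.factorial k : ℝ) * (Nat.factorial (k - k) : ℝ)) *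
        (fallingFac n k / risingFac (n + θ) k)
      = -((k : ℝ) * ((k : ℝ) + θ - 1) / 2) *
        (Real.exp (-(k * (k + θ - 1) * t) / 2) * (-1 : ℝ) ^ (k - k) *
          ((2 * k + θ - 1) * risingFac (k + θ) (k - 1)) /
            ((Nat.factorial k : ℝ) * (Nat.factorial (k - k) : ℝ)) *
          (fallingFac n k / risingFac (n + θ) k)) := by ring
  rw [h0]
  have hterm : ∀ j ∈ Finset.Ioc k n,
      Real.exp (-(j * (j + θ - 1) * t) / 2) * (-((j : ℝ) * ((j : ℝ) + θ - 1)) / 2)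
        * (-1 : ℝ) ^ (j - k) *
        ((2 * j + θ - 1) * risingFac (k + θ) (j - 1)) /
          ((Nat.factorial k : ℝ) * (Nat.factorial (j - k) : ℝ)) *
        (fallingFac n j / risingFac (n + θ) j)
      = -((k : ℝ) * ((k : ℝ) + θ - 1) / 2) *
          (Real.exp (-(j * (j + θ - 1) * t) / 2) * (-1 : ℝ) ^ (j - k) *
            ((2 * j + θ - 1) * risingFac (k + θ) (j - 1)) /
              ((Nat.factorial k : ℝ) * (Nat.factorial (j - k) : ℝ)) *
            (fallingFac n j / risingFac (n + θ) j))
        + ((k : ℝ) + 1) * ((k : ℝ) + θ) / 2 *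
          (Real.exp (-(j * (j + θ - 1) * t) / 2) * (-1 : ℝ) ^ (j - (k + 1)) *
            ((2 * j + θ - 1) * risingFac ((k + 1 : ℕ) + θ) (j - 1)) /
              ((Nat.factorial (k + 1) : ℝ) * (Nat.factorial (j - (k + 1)) : ℝ)) *
            (fallingFac n j / risingFac (n + θ) j)) := by
    intro j hj
    obtain ⟨hkj, hjn⟩ := Finset.mem_Ioc.mp hj
    have hkj' : k + 1 ≤ j := hkj
    have hjk : j - k = (j - (k + 1)) + 1 := by omega
    have hsign : (-1 : ℝ) ^ (j - k) = -(-1 : ℝ) ^ (j - (k + 1)) := by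
      rw [hjk, pow_succ]; ring
    have hfac : ((Nat.factorial (j - k) : ℝ)) = ((j : ℝ) - (k : ℝ)) * (Nat.factorial (j - (k + 1)) : ℝ) := by
      rw [hjk, Nat.factorial_succ]
      push_cast
      rw [Nat.cast_sub (by omega : k + 1 ≤ j)]
      push_cast; ring
    have hfac1 : ((Nat.factorial (k + 1) : ℝ)) = ((k : ℝ) + 1) * (Nat.factorial k : ℝ) := by
      rw [Nat.factorial_succ]; push_cast; ring
    have hkθ : (0 : ℝ) < (k : ℝ) + θ := by
      have : (1 : ℝ) ≤ (k : ℝ) := by exact_mod_cast hk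
      linarith
    have hshift : ((k : ℝ) + θ) * risingFac ((k : ℝ) + θ + 1) (j - 1)
        = risingFac ((k : ℝ) + θ) (j - 1) * ((k : ℝ) + θ + ((j : ℝ) - 1)) := by
      have := risingFac_shift ((k : ℝ) + θ) (j - 1)
      rw [Nat.cast_sub (by omega : 1 ≤ j)] at this
      push_cast at this ⊢
      linarith [this]
    have hR2 : risingFac (((k + 1 : ℕ) : ℝ) + θ) (j - 1)
        = risingFac ((k : ℝ) + θ) (j - 1) * ((k : ℝ) + θ + ((j : ℝ) - 1)) / ((k : ℝ) + θ) := by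
      push_cast
      rw [show (k : ℝ) + 1 + θ = (k : ℝ) + θ + 1 by ring]
      field_simp
      linarith [hshift]
    rw [hsign, hfac, hfac1, hR2]
    have hne1 : ((Nat.factorial k : ℝ)) ≠ 0 := by exact_mod_cast Nat.factorial_ne_zero k
    have hne2 : ((Nat.factorial (j - (k + 1)) : ℝ)) ≠ 0 := by exact_mod_cast Nat.factorial_ne_zero _
    have hne3 : ((j : ℝ) - (k : ℝ)) ≠ 0 := by
      have : (k : ℝ) < (j : ℝ) := by exact_mod_cast hkj
      linarith
    have hK1 : ((k : ℝ) + 1) ≠ 0 := by positivity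
    exact alg_key θ _ _ _ _ _ _ _ _ (ne_of_gt hkθ) hK1 hne1 hne2 hne3
  rw [Finset.sum_congr rfl hterm, Finset.sum_add_distrib]
  ring
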